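/- arXiv:2101.09769 — 2 statements merged into one kernel-verified Lean document; each statement's English description precedes it below -/
import Mathlib

section
/- Let (Ω, B, μ) be a probability space and {N^j} an increasing sequence of finite measurable partitions of Ω. Let W be a finite set, S a collection of subsets of W, and for each e ∈ S let f_e : Ω^e → [0,1] be measurable with respect to the product σ-algebra (Ω,N^σ)^e, where N^σ = σ(⋃_j N^j). Suppose x_W ∈ Ω^W is such that for each e ∈ S, x_e is a point of density of f_e with f^+_e(x_e) > 0, where f^+_e is the a.e. limit of the partition averages over products ∏_{w∈e} N^j(x_w). Then t_S({f_e}) = ∫ ∏_{e∈S} f_e(y_e) dμ^W(y_W) > 0. -/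
open MeasureTheory Filter

/-- The box (product neighborhood) around the e-coordinates of a tuple x determined by
the level-j partition cells N j (x w). -/
def nbox {Ω W : Type*} (N : ℕ → Ω → Set Ω) (e : Finset W) (j : ℕ) (x : W → Ω) :
    Set (W → Ω) :=
  {y | ∀ w ∈ e, y w ∈ N j (x w)}

section
set_option linter.unusedSectionVars false
variable {Ω : Type*} [MeasurableSpace Ω] {W : Type*} [Fintype W] [DecidableEq W]

lemma aux_setOf_eq_pi (s : Finset W) (t : W → Set Ω) :
    {y : W → Ω | ∀ w ∈ s, y w ∈ t w} = Set.pi ↑s t := by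
  ext y; simp [Set.mem_pi]

lemma aux_meas (s : Finset W) (t : W → Set Ω) (ht : ∀ w, MeasurableSet (t w)) :
    MeasurableSet {y : W → Ω | ∀ w ∈ s, y w ∈ t w} := by
  rw [aux_setOf_eq_pi]
  exact MeasurableSet.pi s.countable_toSet fun w _ => ht w

lemma aux_measure (μ : Measure Ω) [IsProbabilityMeasure μ] (s : Finset W) (t : W → Set Ω)
    (ht : ∀ w, MeasurableSet (t w)) :
    (Measure.pi fun _ : W => μ) {y | ∀ w ∈ s, y w ∈ t w} = ∏ w ∈ s, μ (t w) := by
  classical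
  have h : {y : W → Ω | ∀ w ∈ s, y w ∈ t w}
      = Set.pi Set.univ (fun w => if w ∈ s then t w else Set.univ) := by
    ext y
    simp only [Set.mem_setOf_eq, Set.mem_pi, Set.mem_univ, forall_true_left]
    constructor
    · intro h w; split_ifs with hw
      · exact h w hw
      · trivial
    · intro h w hw; have := h w; rwa [if_pos hw] at this
  rw [h, Measure.pi_pi]
  have : ∀ w : W, μ (if w ∈ s then t w else Set.univ) = if w ∈ s then μ (t w) else 1 := by
    intro w; split_ifs <;> simp
  simp_rw [this]
  exact Fintype.prod_ite_mem s (fun w => μ (t w))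

/-- Factorization: integrating a function depending only on `e`-coordinates over a box
constraining `s`-coordinates splits off the measure of the `s \ e` constraints. -/
lemma aux_factor (μ : Measure Ω) [IsProbabilityMeasure μ] (e s : Finset W) (t : W → Set Ω)
    (ht : ∀ w, MeasurableSet (t w)) (g : (W → Ω) → ℝ)
    (hdep : ∀ y z : W → Ω, (∀ w ∈ e, y w = z w) → g y = g z) (x0 : W → Ω) :
    ∫ y in {y | ∀ w ∈ s, y w ∈ t w}, g y ∂(Measure.pi fun _ : W => μ)
      = (∏ w ∈ s \ e, μ (t w)).toReal
        * ∫ y in {y | ∀ w ∈ s ∩ e, y w ∈ t w}, g y ∂(Measure.pi fun _ : W => μ) := by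
  classical
  set μW : Measure (W → Ω) := Measure.pi fun _ : W => μ with hμW
  set p : W → Prop := fun w => w ∈ e with hp
  clear_value p
  have hpw : ∀ w, p w ↔ w ∈ e := fun w => by rw [hp]
  haveI : DecidablePred p := fun w => decidable_of_iff (w ∈ e) (hpw w).symm
  set ME := MeasurableEquiv.piEquivPiSubtypeProd (fun _ : W => Ω) p with hME
  have MP := measurePreserving_piEquivPiSubtypeProd (fun _ : W => μ) p
  set ν1 : Measure (∀ _ : Subtype p, Ω) := Measure.pi fun _ => μ with hν1
  set ν2 : Measure (∀ _ : {w // ¬ p w}, Ω) := Measure.pi fun _ => μ with hν2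
  have MPs : MeasurePreserving ME.symm (ν1.prod ν2) μW := by
    rw [hν1, hν2, hμW, hME]
    exact MeasurePreserving.symm _ MP
  have key : ∀ F : (W → Ω) → ℝ,
      ∫ y, F y ∂μW = ∫ z, F (ME.symm z) ∂(ν1.prod ν2) := by
    intro F
    exact (MPs.integral_comp ME.symm.measurableEmbedding F).symm
  have symm_apply : ∀ (z1 : ∀ _ : Subtype p, Ω) (z2 : ∀ _ : {w // ¬ p w}, Ω) (w : W),
      ME.symm (z1, z2) w = if h : p w then z1 ⟨w, h⟩ else z2 ⟨w, h⟩ := by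
    intro z1 z2 w
    rfl
  set Aall : Set (W → Ω) := {y | ∀ w ∈ s, y w ∈ t w} with hAall
  set Ain : Set (W → Ω) := {y | ∀ w ∈ s ∩ e, y w ∈ t w} with hAin
  set Aout : Set (W → Ω) := {y | ∀ w ∈ s \ e, y w ∈ t w} with hAout
  set G1 : (∀ _ : Subtype p, Ω) → ℝ :=
    fun z1 => Set.indicator Ain g (ME.symm (z1, fun w => x0 ↑w)) with hG1
  set G2 : (∀ _ : {w // ¬ p w}, Ω) → ℝ :=
    fun z2 => Set.indicator Aout (fun _ => (1:ℝ)) (ME.symm ((fun w => x0 ↑w), z2)) with hG2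
  -- dependence facts
  have hin_dep : ∀ (z1 : ∀ _ : Subtype p, Ω) (z2 z2' : ∀ _ : {w // ¬ p w}, Ω),
      Set.indicator Ain g (ME.symm (z1, z2)) = Set.indicator Ain g (ME.symm (z1, z2')) := by
    intro z1 z2 z2'
    have hcoord : ∀ w ∈ e, ME.symm (z1, z2) w = ME.symm (z1, z2') w := by
      intro w hw
      rw [symm_apply, symm_apply, dif_pos ((hpw w).2 hw), dif_pos ((hpw w).2 hw)]
    have hmem : ME.symm (z1, z2) ∈ Ain ↔ ME.symm (z1, z2') ∈ Ain := by
      simp only [hAin, Set.mem_setOf_eq]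
      constructor <;> intro h w hw <;>
        [rw [← hcoord w (Finset.mem_of_mem_inter_right hw)];
         rw [hcoord w (Finset.mem_of_mem_inter_right hw)]] <;> exact h w hw
    have hval : g (ME.symm (z1, z2)) = g (ME.symm (z1, z2')) := hdep _ _ hcoord
    by_cases h : ME.symm (z1, z2) ∈ Ain
    · rw [Set.indicator_of_mem h, Set.indicator_of_mem (hmem.1 h), hval]
    · rw [Set.indicator_of_notMem h, Set.indicator_of_notMem (fun hc => h (hmem.2 hc))]
  have hout_dep : ∀ (z1 z1' : ∀ _ : Subtype p, Ω) (z2 : ∀ _ : {w // ¬ p w}, Ω),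
      Set.indicator Aout (fun _ => (1:ℝ)) (ME.symm (z1, z2))
        = Set.indicator Aout (fun _ => (1:ℝ)) (ME.symm (z1', z2)) := by
    intro z1 z1' z2
    have hmem : ME.symm (z1, z2) ∈ Aout ↔ ME.symm (z1', z2) ∈ Aout := by
      simp only [hAout, Set.mem_setOf_eq]
      have hcoord : ∀ w ∈ s \ e, ME.symm (z1, z2) w = ME.symm (z1', z2) w := by
        intro w hw
        have hnp : ¬ p w := fun hq => (Finset.mem_sdiff.mp hw).2 ((hpw w).1 hq)
        rw [symm_apply, symm_apply, dif_neg hnp, dif_neg hnp]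
      constructor <;> intro h w hw <;> [rw [← hcoord w hw]; rw [hcoord w hw]] <;> exact h w hw
    by_cases h : ME.symm (z1, z2) ∈ Aout
    · rw [Set.indicator_of_mem h, Set.indicator_of_mem (hmem.1 h)]
    · rw [Set.indicator_of_notMem h, Set.indicator_of_notMem (fun hc => h (hmem.2 hc))]
  -- splitting of the indicator
  have hsplit : ∀ y : W → Ω,
      Set.indicator Aall g y = Set.indicator Ain g y * Set.indicator Aout (fun _ => (1:ℝ)) y := by
    intro y
    have hiff : y ∈ Aall ↔ y ∈ Ain ∧ y ∈ Aout := by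
      simp only [hAall, hAin, hAout, Set.mem_setOf_eq]
      constructor
      · intro h
        exact ⟨fun w hw => h w (Finset.mem_of_mem_inter_left hw),
               fun w hw => h w (Finset.mem_sdiff.mp hw).1⟩
      · rintro ⟨h1, h2⟩ w hw
        by_cases hwe : w ∈ e
        · exact h1 w (Finset.mem_inter.mpr ⟨hw, hwe⟩)
        · exact h2 w (Finset.mem_sdiff.mpr ⟨hw, hwe⟩)
    by_cases h : y ∈ Aall
    · rw [Set.indicator_of_mem h, Set.indicator_of_mem (hiff.1 h).1,
        Set.indicator_of_mem (hiff.1 h).2, mul_one]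
    · rcases (not_and_or.mp (fun hc => h (hiff.2 hc))) with h1 | h2
      · rw [Set.indicator_of_notMem h, Set.indicator_of_notMem h1, zero_mul]
      · rw [Set.indicator_of_notMem h, Set.indicator_of_notMem h2, mul_zero]
  have hAallm : MeasurableSet Aall := aux_meas s t ht
  have hAinm : MeasurableSet Ain := aux_meas (s ∩ e) t ht
  -- main computation
  have main : ∫ y in Aall, g y ∂μW = (∫ z1, G1 z1 ∂ν1) * (∫ z2, G2 z2 ∂ν2) := by
    rw [← integral_indicator hAallm, key]
    have : ∀ z : (∀ _ : Subtype p, Ω) × (∀ _ : {w // ¬ p w}, Ω),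
        Set.indicator Aall g (ME.symm z) = G1 z.1 * G2 z.2 := by
      rintro ⟨z1, z2⟩
      rw [hsplit]
      simp only [hG1, hG2]
      rw [hin_dep z1 z2 (fun w => x0 ↑w), hout_dep z1 (fun w => x0 ↑w) z2]
    simp_rw [this]
    exact integral_prod_mul G1 G2
  have hG1int : ∫ z1, G1 z1 ∂ν1 = ∫ y in Ain, g y ∂μW := by
    rw [← integral_indicator hAinm, key]
    have : ∀ z : (∀ _ : Subtype p, Ω) × (∀ _ : {w // ¬ p w}, Ω),
        Set.indicator Ain g (ME.symm z) = G1 z.1 * (fun _ => (1:ℝ)) z.2 := by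
      rintro ⟨z1, z2⟩
      simp only [hG1, mul_one]
      exact hin_dep z1 z2 (fun w => x0 ↑w)
    simp_rw [this]
    rw [integral_prod_mul G1 (fun _ => (1:ℝ))]
    simp
  have hG2int : ∫ z2, G2 z2 ∂ν2 = (∏ w ∈ s \ e, μ (t w)).toReal := by
    have hT2 : ∀ z2 : ∀ _ : {w // ¬ p w}, Ω,
        G2 z2 = Set.indicator
          (Set.pi Set.univ (fun w : {w // ¬ p w} => if (w : W) ∈ s then t w else Set.univ))
          (fun _ => (1:ℝ)) z2 := by
      intro z2
      have hmem : ME.symm ((fun w => x0 ↑w), z2) ∈ Aout ↔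
          z2 ∈ Set.pi Set.univ (fun w : {w // ¬ p w} => if (w : W) ∈ s then t w else Set.univ) := by
        simp only [hAout, Set.mem_setOf_eq, Set.mem_pi, Set.mem_univ, forall_true_left]
        constructor
        · intro h w
          split_ifs with hws
          · have hw : (w : W) ∈ s \ e := Finset.mem_sdiff.mpr ⟨hws, fun he => w.2 ((hpw _).2 he)⟩
            have := h _ hw
            rwa [symm_apply, dif_neg w.2] at this
          · trivial
        · intro h w hw
          have hnp : ¬ p w := fun hq => (Finset.mem_sdiff.mp hw).2 ((hpw w).1 hq)
          rw [symm_apply, dif_neg hnp]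
          have := h ⟨w, hnp⟩
          rwa [if_pos (Finset.mem_sdiff.mp hw).1] at this
      show Set.indicator Aout (fun _ => (1:ℝ)) (ME.symm ((fun w => x0 ↑w), z2)) = _
      by_cases h : ME.symm ((fun w => x0 ↑w), z2) ∈ Aout
      · rw [Set.indicator_of_mem h, Set.indicator_of_mem (hmem.1 h)]
      · rw [Set.indicator_of_notMem h, Set.indicator_of_notMem (fun hc => h (hmem.2 hc))]
    simp_rw [hT2]
    have hm2 : MeasurableSet
        (Set.pi Set.univ (fun w : {w // ¬ p w} => if (w : W) ∈ s then t w else Set.univ)) := by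
      apply MeasurableSet.pi (Set.countable_univ)
      intro w _
      split_ifs
      · exact ht w
      · exact MeasurableSet.univ
    rw [integral_indicator_const (1:ℝ) hm2, smul_eq_mul, mul_one]
    congr 1
    rw [measureReal_def, hν2, Measure.pi_pi]
    have hite : ∀ w : {w // ¬ p w}, μ (if (w : W) ∈ s then t w else Set.univ)
        = if (w : W) ∈ s then μ (t w) else 1 := by
      intro w; split_ifs <;> simp
    simp_rw [hite]
    rw [← Finset.prod_subtype (p := fun w => ¬ p w) eᶜ
      (fun w => by simp [Finset.mem_compl, hpw]) (fun w => if w ∈ s then μ (t w) else 1)]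
    rw [Finset.prod_ite_mem eᶜ s (fun w => μ (t w))]
    rw [Finset.inter_comm eᶜ s, sdiff_eq]
    rfl
  rw [main, hG1int, hG2int, mul_comm]

/-- The σ-algebra on Ω generated by the level-`j` cells. -/
def cellSA (N : ℕ → Ω → Set Ω) (j : ℕ) : MeasurableSpace Ω :=
  MeasurableSpace.generateFrom (Set.range (N j))

/-- The product σ-algebra on `W → Ω` generated coordinatewise by the level-`j` cells. -/
def boxSA (N : ℕ → Ω → Set Ω) (j : ℕ) : MeasurableSpace (W → Ω) :=
  @MeasurableSpace.pi W (fun _ => Ω) (fun _ => cellSA N j)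

lemma aux_pi_mono {m1 m2 : W → MeasurableSpace Ω} (h : ∀ w, m1 w ≤ m2 w) :
    @MeasurableSpace.pi W (fun _ => Ω) m1 ≤ @MeasurableSpace.pi W (fun _ => Ω) m2 :=
  iSup_mono fun w => MeasurableSpace.comap_mono (h w)

lemma cellSA_le (N : ℕ → Ω → Set Ω) (hmeasN : ∀ j x, MeasurableSet (N j x)) (j : ℕ) :
    cellSA N j ≤ ‹MeasurableSpace Ω› :=
  MeasurableSpace.generateFrom_le (by rintro s ⟨z, rfl⟩; exact hmeasN j z)

lemma boxSA_le (N : ℕ → Ω → Set Ω) (hmeasN : ∀ j x, MeasurableSet (N j x)) (j : ℕ) :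
    boxSA (W := W) N j ≤ MeasurableSpace.pi :=
  aux_pi_mono fun _ => cellSA_le N hmeasN j

lemma cellSA_mono (N : ℕ → Ω → Set Ω)
    (hmem : ∀ j x, x ∈ N j x) (hcell : ∀ j x y, y ∈ N j x → N j y = N j x)
    (hfin : ∀ j, (Set.range (N j)).Finite) (href : ∀ j x, N (j + 1) x ⊆ N j x) (j : ℕ) :
    cellSA N j ≤ cellSA N (j + 1) := by
  apply MeasurableSpace.generateFrom_le
  rintro s ⟨z, rfl⟩
  have hset : N j z = ⋃ c ∈ {c | c ∈ Set.range (N (j+1)) ∧ c ⊆ N j z}, c := by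
    ext u
    simp only [Set.mem_iUnion, Set.mem_setOf_eq]
    constructor
    · intro hu
      exact ⟨N (j+1) u, ⟨⟨u, rfl⟩, fun v hv => (hcell j z u hu) ▸ href j u hv⟩, hmem (j+1) u⟩
    · rintro ⟨c, ⟨_, hsub⟩, hc⟩
      exact hsub hc
  rw [hset]
  apply MeasurableSet.biUnion
  · exact ((hfin (j+1)).subset (Set.sep_subset _ _)).countable
  · rintro c ⟨hc, -⟩
    exact MeasurableSpace.measurableSet_generateFrom hc
  
lemma boxSA_mono (N : ℕ → Ω → Set Ω)
    (hmem : ∀ j x, x ∈ N j x) (hcell : ∀ j x y, y ∈ N j x → N j y = N j x)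
    (hfin : ∀ j, (Set.range (N j)).Finite) (href : ∀ j x, N (j + 1) x ⊆ N j x) :
    Monotone (fun j => boxSA (W := W) N j) :=
  monotone_nat_of_le_succ fun j =>
    aux_pi_mono fun _ => cellSA_mono N hmem hcell hfin href j

/-- evaluation is measurable from the box σ-algebra to the cell σ-algebra -/
lemma eval_measurable (N : ℕ → Ω → Set Ω) (j : ℕ) (w : W) :
    @Measurable (W → Ω) Ω (boxSA N j) (cellSA N j) (fun y => y w) :=
  @measurable_pi_apply W (fun _ => Ω) (fun _ => cellSA N j) w

/-- full boxes are measurable for the box σ-algebra -/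
lemma fullbox_measurable (N : ℕ → Ω → Set Ω) (j : ℕ) (y : W → Ω) :
    MeasurableSet[boxSA N j] {z : W → Ω | ∀ w, z w ∈ N j (y w)} := by
  have : {z : W → Ω | ∀ w, z w ∈ N j (y w)} = ⋂ w, (fun z : W → Ω => z w) ⁻¹' (N j (y w)) := by
    ext z; simp
  rw [this]
  exact MeasurableSet.iInter fun w =>
    eval_measurable N j w (MeasurableSpace.measurableSet_generateFrom ⟨y w, rfl⟩)

/-- every box-σ-algebra measurable set is a union of full boxes -/
lemma boxSA_union_of_boxes (N : ℕ → Ω → Set Ω)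
    (hmem : ∀ j x, x ∈ N j x) (hcell : ∀ j x y, y ∈ N j x → N j y = N j x) (j : ℕ)
    (s : Set (W → Ω)) (hs : MeasurableSet[boxSA N j] s) :
    ∀ y ∈ s, {z : W → Ω | ∀ w, z w ∈ N j (y w)} ⊆ s := by
  set M : MeasurableSpace (W → Ω) :=
    { MeasurableSet' := fun s => ∀ y ∈ s, {z : W → Ω | ∀ w, z w ∈ N j (y w)} ⊆ s
      measurableSet_empty := by simp
      measurableSet_compl := by
        intro s hs y hy z hz hzs
        have hbox : ∀ w, N j (z w) = N j (y w) := fun w => hcell j (y w) (z w) (hz w)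
        have : y ∈ {u : W → Ω | ∀ w, u w ∈ N j (z w)} := by
          intro w; rw [hbox w]; exact hmem j (y w)
        exact hy (hs z hzs this)
      measurableSet_iUnion := by
        intro g hg y hy
        obtain ⟨i, hyi⟩ := Set.mem_iUnion.mp hy
        exact (hg i y hyi).trans (Set.subset_iUnion g i) } with hM
  have hle : boxSA N j ≤ M := by
    refine iSup_le fun w => ?_
    show MeasurableSpace.comap (fun b => b w)
      (MeasurableSpace.generateFrom (Set.range (N j))) ≤ M
    rw [MeasurableSpace.comap_generateFrom]
    apply MeasurableSpace.generateFrom_le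
    rintro t ⟨c, ⟨z0, rfl⟩, rfl⟩
    intro y hy u hu
    have : N j (y w) = N j z0 := hcell j z0 (y w) hy
    exact this ▸ (this ▸ hu w : u w ∈ N j (y w))
  exact hle s hs

/-- the box average of `F` at level `j` over the `e`-coordinates -/
noncomputable def boxAvg (μ : Measure Ω) (N : ℕ → Ω → Set Ω) (e : Finset W) (j : ℕ)
    (F : (W → Ω) → ℝ) : (W → Ω) → ℝ :=
  fun y => (∫ z in nbox N e j y, F z ∂(Measure.pi fun _ : W => μ))
    / ((Measure.pi fun _ : W => μ) (nbox N e j y)).toReal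

lemma boxAvg_measurable (μ : Measure Ω) (N : ℕ → Ω → Set Ω)
    (hmem : ∀ j x, x ∈ N j x) (hcell : ∀ j x y, y ∈ N j x → N j y = N j x)
    (hfin : ∀ j, (Set.range (N j)).Finite) (e : Finset W) (j : ℕ) (F : (W → Ω) → ℝ) :
    @Measurable (W → Ω) ℝ (boxSA N j) _ (boxAvg μ N e j F) := by
  classical
  haveI : Finite ↥(Set.range (N j)) := (hfin j).to_subtype
  letI K := W → ↥(Set.range (N j))
  haveI : Countable K := inferInstance
  letI mK : MeasurableSpace K := ⊤
  set π : (W → Ω) → K := fun y w => ⟨N j (y w), Set.mem_range_self _⟩ with hπdef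
  have hπ : @Measurable (W → Ω) K (boxSA N j) mK π := by
    refine @measurable_to_countable K (W → Ω) mK _ (boxSA N j) (f := π) ?_
    intro y
    have : π ⁻¹' {π y} = {z : W → Ω | ∀ w, z w ∈ N j (y w)} := by
      ext z
      simp only [Set.mem_preimage, Set.mem_singleton_iff, Set.mem_setOf_eq, hπdef]
      constructor
      · intro h w
        have h2 : N j (z w) = N j (y w) := congrArg Subtype.val (congrFun h w)
        exact h2 ▸ hmem j (z w)
      · intro h
        funext w
        exact Subtype.ext (hcell j (y w) (z w) (h w))
    rw [this]
    exact fullbox_measurable N j y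
  set Θ : K → ℝ := fun κ =>
    (∫ z in {z : W → Ω | ∀ w ∈ e, z w ∈ (κ w : Set Ω)}, F z ∂(Measure.pi fun _ : W => μ))
      / ((Measure.pi fun _ : W => μ) {z : W → Ω | ∀ w ∈ e, z w ∈ (κ w : Set Ω)}).toReal
    with hΘ
  have : boxAvg μ N e j F = Θ ∘ π := rfl
  rw [this]
  exact (@measurable_from_top K ℝ _ Θ).comp hπ


lemma nbox_measurable (μ : Measure Ω) (N : ℕ → Ω → Set Ω)
    (hmeasN : ∀ j x, MeasurableSet (N j x)) (e : Finset W) (j : ℕ) (y : W → Ω) :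
    MeasurableSet (nbox N e j y) :=
  aux_meas e (fun w => N j (y w)) (fun w => hmeasN j (y w))

lemma boxAvg_mem_Icc (μ : Measure Ω) [IsProbabilityMeasure μ] (N : ℕ → Ω → Set Ω)
    (hmeasN : ∀ j x, MeasurableSet (N j x)) (e : Finset W) (j : ℕ) (F : (W → Ω) → ℝ)
    (hF01 : ∀ y, F y ∈ Set.Icc (0:ℝ) 1) (hFint : Integrable F (Measure.pi fun _ : W => μ)) :
    ∀ y, boxAvg μ N e j F y ∈ Set.Icc (0:ℝ) 1 := by
  intro y
  set μW : Measure (W → Ω) := Measure.pi fun _ : W => μ with hμW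
  set A := nbox N e j y with hA
  have hAm : MeasurableSet A := nbox_measurable μ N hmeasN e j y
  have hnum0 : 0 ≤ ∫ z in A, F z ∂μW :=
    setIntegral_nonneg hAm fun z _ => (hF01 z).1
  have hnum1 : ∫ z in A, F z ∂μW ≤ (μW A).toReal := by
    have : ∫ z in A, F z ∂μW ≤ ∫ _ in A, (1:ℝ) ∂μW :=
      setIntegral_mono_on hFint.integrableOn
        (integrableOn_const (measure_ne_top μW A))
        hAm fun z _ => (hF01 z).2
    simpa [Measure.real] using this
  constructor
  · exact div_nonneg hnum0 ENNReal.toReal_nonneg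
  · rcases eq_or_ne ((μW A).toReal) 0 with h0 | h0
    · simp [boxAvg, ← hμW, ← hA, h0]
    · exact div_le_one_of_le₀ hnum1 ENNReal.toReal_nonneg |>.trans_eq rfl
      

lemma boxAvg_ae_eq_condexp (μ : Measure Ω) [IsProbabilityMeasure μ] (N : ℕ → Ω → Set Ω)
    (hmem : ∀ j x, x ∈ N j x) (hmeasN : ∀ j x, MeasurableSet (N j x))
    (hcell : ∀ j x y, y ∈ N j x → N j y = N j x)
    (hfin : ∀ j, (Set.range (N j)).Finite)
    (e : Finset W) (j : ℕ) (F : (W → Ω) → ℝ)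
    (hF01 : ∀ y, F y ∈ Set.Icc (0:ℝ) 1) (hFmeas : Measurable F)
    (hFdep : ∀ y z : W → Ω, (∀ w ∈ e, y w = z w) → F y = F z) (x0 : W → Ω) :
    boxAvg μ N e j F =ᵐ[Measure.pi fun _ : W => μ]
      (Measure.pi fun _ : W => μ)[F | boxSA N j] := by
  classical
  set μW : Measure (W → Ω) := Measure.pi fun _ : W => μ with hμW
  have hm : boxSA (W := W) N j ≤ MeasurableSpace.pi := boxSA_le N hmeasN j
  haveI : SigmaFinite (μW.trim hm) := by infer_instance
  have hFint : Integrable F μW := by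
    refine Integrable.mono' (integrable_const (1:ℝ)) hFmeas.aestronglyMeasurable ?_
    filter_upwards with y
    rw [Real.norm_eq_abs, abs_le]
    exact ⟨by linarith [(hF01 y).1], (hF01 y).2⟩
  have hGmeasBox := boxAvg_measurable μ N hmem hcell hfin e j F
  have hGmeas : Measurable (boxAvg μ N e j F) := hGmeasBox.mono hm le_rfl
  have hGint : Integrable (boxAvg μ N e j F) μW := by
    refine Integrable.mono' (integrable_const (1:ℝ)) hGmeas.aestronglyMeasurable ?_
    filter_upwards with y
    rw [Real.norm_eq_abs, abs_le]
    have := boxAvg_mem_Icc μ N hmeasN e j F hF01 hFint y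
    exact ⟨by linarith [this.1], this.2⟩
  refine ae_eq_condExp_of_forall_setIntegral_eq hm hFint
    (fun s _ _ => hGint.integrableOn) ?_ (hGmeasBox.stronglyMeasurable.aestronglyMeasurable)
  intro s hs _
  -- decompose s into full boxes
  haveI : Finite ↥(Set.range (N j)) := (hfin j).to_subtype
  set K := W → ↥(Set.range (N j)) with hK
  haveI : Countable K := inferInstance
  set boxOf : K → Set (W → Ω) := fun κ => {z | ∀ w, z w ∈ (κ w : Set Ω)} with hboxOf
  have hcellK : ∀ (κ : K) (w : W) (u : Ω), u ∈ (κ w : Set Ω) → N j u = (κ w : Set Ω) := by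
    intro κ w u hu
    obtain ⟨v, hv⟩ := (κ w).2
    rw [← hv] at hu ⊢
    exact hcell j v u hu
  have hboxOfMeas : ∀ κ : K, MeasurableSet (boxOf κ) := by
    intro κ
    have : boxOf κ = {z : W → Ω | ∀ w ∈ (Finset.univ : Finset W), z w ∈ (κ w : Set Ω)} := by
      ext z; simp [hboxOf]
    rw [this]
    refine aux_meas _ _ fun w => ?_
    obtain ⟨v, hv⟩ := (κ w).2
    exact hv ▸ hmeasN j v
  set T : Set K := {κ | boxOf κ ⊆ s ∧ (boxOf κ).Nonempty} with hT
  have hsT : s = ⋃ κ : T, boxOf ↑κ := by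
    apply Set.Subset.antisymm
    · intro y hy
      set κy : K := fun w => ⟨N j (y w), Set.mem_range_self _⟩ with hκy
      have hbb : boxOf κy = {z : W → Ω | ∀ w, z w ∈ N j (y w)} := rfl
      have hsubs : boxOf κy ⊆ s := by
        rw [hbb]; exact boxSA_union_of_boxes N hmem hcell j s hs y hy
      have hmemy : y ∈ boxOf κy := by rw [hbb]; exact fun w => hmem j (y w)
      exact Set.mem_iUnion.mpr ⟨⟨κy, hsubs, ⟨y, hmemy⟩⟩, hmemy⟩
    · refine Set.iUnion_subset fun κ => κ.2.1
  have hdisj : Pairwise (Function.onFun Disjoint fun κ : T => boxOf ↑κ) := by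
    intro κ1 κ2 hne
    rw [Function.onFun, Set.disjoint_left]
    intro z hz1 hz2
    apply hne
    apply Subtype.ext
    funext w
    apply Subtype.ext
    rw [← hcellK ↑κ1 w (z w) (hz1 w), ← hcellK ↑κ2 w (z w) (hz2 w)]
  -- per-box equality
  have perbox : ∀ κ : K, ∫ y in boxOf κ, boxAvg μ N e j F y ∂μW = ∫ y in boxOf κ, F y ∂μW := by
    intro κ
    set ebox : Set (W → Ω) := {z | ∀ w ∈ e, z w ∈ (κ w : Set Ω)} with hebox
    set r : ℝ := (∫ z in ebox, F z ∂μW) / (μW ebox).toReal with hr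
    have hconst : Set.EqOn (boxAvg μ N e j F) (fun _ => r) (boxOf κ) := by
      intro y hy
      have hnb : nbox N e j y = ebox := by
        ext z
        constructor
        · intro h w hw
          have := h w hw
          rwa [hcellK κ w (y w) (hy w)] at this
        · intro h w hw
          have := h w hw
          rwa [← hcellK κ w (y w) (hy w)] at this
      show boxAvg μ N e j F y = r
      rw [boxAvg, hnb, ← hμW, ← hr]
    rw [setIntegral_congr_fun (hboxOfMeas κ) hconst, setIntegral_const]
    -- now use the factorization
    have hboxform : boxOf κ = {y : W → Ω | ∀ w ∈ (Finset.univ : Finset W), y w ∈ (κ w : Set Ω)} := by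
      ext z; simp [hboxOf]
    have heboxform : ebox = {y : W → Ω | ∀ w ∈ (Finset.univ : Finset W) ∩ e, y w ∈ (κ w : Set Ω)} := by
      rw [Finset.univ_inter]
    have hκmeas : ∀ w, MeasurableSet ((κ w : Set Ω)) := fun w => by
      obtain ⟨v, hv⟩ := (κ w).2; exact hv ▸ hmeasN j v
    have hfac := aux_factor μ e Finset.univ (fun w => (κ w : Set Ω)) hκmeas F hFdep x0
    rw [← hboxform, ← heboxform, ← hμW] at hfac
    rw [hfac]
    have hmeasure_box : μW (boxOf κ) = ∏ w : W, μ (κ w : Set Ω) := by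
      rw [hboxform, hμW]
      exact aux_measure μ Finset.univ _ (fun w => by
        obtain ⟨v, hv⟩ := (κ w).2; exact hv ▸ hmeasN j v)
    have hmeasure_ebox : μW ebox = ∏ w ∈ e, μ (κ w : Set Ω) := by
      have : ebox = {y : W → Ω | ∀ w ∈ e, y w ∈ (κ w : Set Ω)} := rfl
      rw [this, hμW]
      exact aux_measure μ e _ (fun w => by obtain ⟨v, hv⟩ := (κ w).2; exact hv ▸ hmeasN j v)
    rcases eq_or_ne (μW ebox) 0 with h0 | h0
    · have hInt0 : ∫ z in ebox, F z ∂μW = 0 := by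
        rw [Measure.restrict_eq_zero.mpr h0, integral_zero_measure]
      have hr0 : r = 0 := by rw [hr, hInt0, zero_div]
      rw [hr0, hInt0, smul_zero, mul_zero]
    · have hbtop : (μW ebox) ≠ ⊤ := measure_ne_top μW ebox
      have hBne : (μW ebox).toReal ≠ 0 := ENNReal.toReal_ne_zero.mpr ⟨h0, hbtop⟩
      have hsplit2 : (μW (boxOf κ)).toReal
          = (∏ w ∈ Finset.univ \ e, μ (κ w : Set Ω)).toReal * (μW ebox).toReal := by
        rw [hmeasure_box, hmeasure_ebox, ← ENNReal.toReal_mul,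
          Finset.prod_sdiff (Finset.subset_univ e)]
      rw [measureReal_def, hsplit2, smul_eq_mul, hr]
      rw [mul_assoc, mul_comm ((μW ebox).toReal), div_mul_cancel₀ _ hBne]
  -- assemble
  have h1 := integral_iUnion (μ := μW) (f := boxAvg μ N e j F) (s := fun κ : T => boxOf ↑κ)
    (fun κ => hboxOfMeas ↑κ) hdisj (by rw [← hsT]; exact hGint.integrableOn)
  have h2 := integral_iUnion (μ := μW) (f := F) (s := fun κ : T => boxOf ↑κ)
    (fun κ => hboxOfMeas ↑κ) hdisj (by rw [← hsT]; exact hFint.integrableOn)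
  rw [hsT, h1, h2]
  exact tsum_congr fun κ => perbox ↑κ

lemma boxAvg_tendsto_ae (μ : Measure Ω) [IsProbabilityMeasure μ] (N : ℕ → Ω → Set Ω)
    (hmem : ∀ j x, x ∈ N j x) (hmeasN : ∀ j x, MeasurableSet (N j x))
    (hcell : ∀ j x y, y ∈ N j x → N j y = N j x)
    (hfin : ∀ j, (Set.range (N j)).Finite) (href : ∀ j x, N (j + 1) x ⊆ N j x)
    (e : Finset W) (F : (W → Ω) → ℝ)
    (hF01 : ∀ y, F y ∈ Set.Icc (0:ℝ) 1)
    (hFmeas : Measurable[@MeasurableSpace.pi W (fun _ => Ω)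
      (fun _ => MeasurableSpace.generateFrom {s : Set Ω | ∃ j x, s = N j x})] F)
    (hFdep : ∀ y z : W → Ω, (∀ w ∈ e, y w = z w) → F y = F z) (x0 : W → Ω) :
    ∀ᵐ y ∂(Measure.pi fun _ : W => μ),
      Tendsto (fun j => boxAvg μ N e j F y) atTop (nhds (F y)) := by
  classical
  set μW : Measure (W → Ω) := Measure.pi fun _ : W => μ with hμW
  set ℱ : Filtration ℕ (MeasurableSpace.pi : MeasurableSpace (W → Ω)) :=
    { seq := fun j => boxSA N j
      mono' := boxSA_mono N hmem hcell hfin href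
      le' := fun j => boxSA_le N hmeasN j } with hℱ
  have hFmeas' : Measurable F := by
    refine hFmeas.mono ?_ le_rfl
    refine aux_pi_mono fun w => ?_
    apply MeasurableSpace.generateFrom_le
    rintro t ⟨j, z, rfl⟩
    exact hmeasN j z
  have hFint : Integrable F μW := by
    refine Integrable.mono' (integrable_const (1:ℝ)) hFmeas'.aestronglyMeasurable ?_
    filter_upwards with y
    rw [Real.norm_eq_abs, abs_le]
    exact ⟨by linarith [(hF01 y).1], (hF01 y).2⟩
  have hsup : (@MeasurableSpace.pi W (fun _ => Ω)
      (fun _ => MeasurableSpace.generateFrom {s : Set Ω | ∃ j x, s = N j x}))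
      ≤ ⨆ n, ℱ n := by
    refine iSup_le fun w => ?_
    show MeasurableSpace.comap (fun b => b w)
      (MeasurableSpace.generateFrom {s : Set Ω | ∃ j x, s = N j x}) ≤ ⨆ n, ℱ n
    rw [MeasurableSpace.comap_generateFrom]
    apply MeasurableSpace.generateFrom_le
    rintro t ⟨c, ⟨j, z, rfl⟩, rfl⟩
    have h1 : MeasurableSet[boxSA N j] ((fun b : W → Ω => b w) ⁻¹' N j z) :=
      eval_measurable N j w (MeasurableSpace.measurableSet_generateFrom ⟨z, rfl⟩)
    exact le_iSup (fun n => (ℱ n : MeasurableSpace (W → Ω))) j _ h1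
  have hgmeas : StronglyMeasurable[⨆ n, ℱ n] F :=
    (hFmeas.mono hsup le_rfl).stronglyMeasurable
  have hconv := hFint.tendsto_ae_condExp hgmeas
  have hident : ∀ᵐ y ∂μW, ∀ j : ℕ, boxAvg μ N e j F y = (μW[F | ℱ j]) y := by
    rw [ae_all_iff]
    intro j
    exact boxAvg_ae_eq_condexp μ N hmem hmeasN hcell hfin e j F hF01 hFmeas' hFdep x0
  filter_upwards [hconv, hident] with y h1 h2
  exact Tendsto.congr (fun j => (h2 j).symm) h1
end

/-- The measure-theoretic graph counting lemma: if each f_e is measurable with respect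
to the product of the σ-algebra generated by the partition cells, and x_W is a tuple
such that each x_e is a positive point of density of f_e (for the box neighborhoods),
then t_S({f_e}) > 0. -/
theorem stmt_11
    {Ω : Type*} [MeasurableSpace Ω] (μ : Measure Ω) [IsProbabilityMeasure μ]
    (N : ℕ → Ω → Set Ω)
    (hmem : ∀ j x, x ∈ N j x)
    (hmeasN : ∀ j x, MeasurableSet (N j x))
    (hcell : ∀ j x y, y ∈ N j x → N j y = N j x)
    (hfin : ∀ j, (Set.range (N j)).Finite)
    (href : ∀ j x, N (j + 1) x ⊆ N j x)
    {W : Type*} [Fintype W] [DecidableEq W]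
    (S : Finset (Finset W))
    (f fplus : Finset W → (W → Ω) → ℝ)
    (h01 : ∀ e ∈ S, ∀ x, f e x ∈ Set.Icc (0 : ℝ) 1)
    (hdep : ∀ e ∈ S, ∀ x y : W → Ω, (∀ w ∈ e, x w = y w) → f e x = f e y)
    (hmeasf : ∀ e ∈ S,
      Measurable[@MeasurableSpace.pi W (fun _ => Ω)
        (fun _ => MeasurableSpace.generateFrom {s : Set Ω | ∃ j x, s = N j x})] (f e))
    -- fplus e is the a.e. limit of the partition averages of f e over the boxes
    (hlim : ∀ e ∈ S, ∀ᵐ y ∂(Measure.pi fun _ : W => μ),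
      Tendsto
        (fun j => (∫ z in nbox N e j y, f e z ∂(Measure.pi fun _ : W => μ))
          / ((Measure.pi fun _ : W => μ) (nbox N e j y)).toReal)
        atTop (nhds (fplus e y)))
    (x : W → Ω)
    -- the limit density exists at x and is positive
    (hlimx : ∀ e ∈ S,
      Tendsto
        (fun j => (∫ z in nbox N e j x, f e z ∂(Measure.pi fun _ : W => μ))
          / ((Measure.pi fun _ : W => μ) (nbox N e j x)).toReal)
        atTop (nhds (fplus e x)))
    (hposx : ∀ e ∈ S, 0 < fplus e x)
    -- x_e is a point of density of f_e
    (hdens : ∀ e ∈ S,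
      Tendsto
        (fun j => (∫ z in nbox N e j x, |fplus e z - fplus e x|
            ∂(Measure.pi fun _ : W => μ))
          / ((Measure.pi fun _ : W => μ) (nbox N e j x)).toReal)
        atTop (nhds 0)) :
    0 < ∫ y, ∏ e ∈ S, f e y ∂(Measure.pi fun _ : W => μ) := by
  classical
  set μW : Measure (W → Ω) := Measure.pi fun _ : W => μ with hμW
  haveI : IsProbabilityMeasure μW := by rw [hμW]; infer_instance
  rcases S.eq_empty_or_nonempty with rfl | hSne
  · simp only [Finset.prod_empty]
    rw [integral_const, measureReal_def, measure_univ]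
    norm_num
  -- measurability and integrability of the f e
  have hfmeas' : ∀ e ∈ S, Measurable (f e) := by
    intro e he
    refine (hmeasf e he).mono (aux_pi_mono fun w => MeasurableSpace.generateFrom_le ?_) le_rfl
    rintro t ⟨j, z, rfl⟩
    exact hmeasN j z
  have hfint : ∀ e ∈ S, Integrable (f e) μW := by
    intro e he
    refine Integrable.mono' (integrable_const (1:ℝ)) (hfmeas' e he).aestronglyMeasurable ?_
    filter_upwards with y
    rw [Real.norm_eq_abs, abs_le]
    exact ⟨by linarith [(h01 e he y).1], (h01 e he y).2⟩
  -- a.e. identification of f e with fplus e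
  have hfeq : ∀ e ∈ S, f e =ᵐ[μW] fplus e := by
    intro e he
    have h1 := boxAvg_tendsto_ae μ N hmem hmeasN hcell hfin href e (f e) (h01 e he)
      (hmeasf e he) (hdep e he) x
    filter_upwards [h1, hlim e he] with y hy1 hy2
    exact tendsto_nhds_unique hy1 hy2
  -- positivity of box measures around x
  have hnboxpos : ∀ e ∈ S, ∀ j, μW (nbox N e j x) ≠ 0 := by
    intro e he j h0
    have hmono : ∀ k, μW (nbox N e (j + k) x) = 0 := by
      intro k; induction k with
      | zero => simpa using h0
      | succ k ih =>
        have hsub : nbox N e (j+(k+1)) x ⊆ nbox N e (j+k) x := by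
          intro z hz w hw; exact href _ _ (hz w hw)
        exact le_antisymm ((measure_mono hsub).trans (le_of_eq ih)) zero_le
    have hev : ∀ᶠ k in atTop,
        (fun k => (∫ z in nbox N e k x, f e z ∂μW) / (μW (nbox N e k x)).toReal) k = 0 := by
      filter_upwards [eventually_ge_atTop j] with k hk
      obtain ⟨m, rfl⟩ := Nat.exists_eq_add_of_le hk
      rw [Measure.restrict_eq_zero.mpr (hmono m), integral_zero_measure, zero_div]
    have h2 : Tendsto (fun _ : ℕ => (0:ℝ)) atTop (nhds (fplus e x)) :=
      (hlimx e he).congr' hev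
    exact absurd (tendsto_nhds_unique h2 tendsto_const_nhds) (ne_of_gt (hposx e he))
  -- union of all relevant coordinates
  set U : Finset W := S.sup id with hU
  have heU : ∀ e ∈ S, e ⊆ U := fun e he => Finset.le_sup (f := id) he
  have hnboxval : ∀ (e : Finset W) (j : ℕ), μW (nbox N e j x) = ∏ w ∈ e, μ (N j (x w)) := by
    intro e j
    rw [hμW]
    exact aux_measure μ e _ (fun w => hmeasN j (x w))
  have hUpos : ∀ j, ∀ w ∈ U, μ (N j (x w)) ≠ 0 := by
    intro j w hw
    obtain ⟨e, he, hwe⟩ := Finset.mem_sup.mp hw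
    have h := hnboxpos e he j
    rw [hnboxval e j] at h
    exact Finset.prod_ne_zero_iff.mp h w hwe
  -- the number of constraints
  have hcard : 0 < (S.card : ℝ) := by exact_mod_cast Finset.card_pos.mpr hSne
  -- convergence of the densities with f in place of fplus
  have hδ : ∀ e ∈ S, Tendsto (fun j => (∫ z in nbox N e j x, |f e z - fplus e x| ∂μW)
      / (μW (nbox N e j x)).toReal) atTop (nhds 0) := by
    intro e he
    have hcongr : ∀ j, ∫ z in nbox N e j x, |f e z - fplus e x| ∂μW
        = ∫ z in nbox N e j x, |fplus e z - fplus e x| ∂μW := by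
      intro j
      refine integral_congr_ae (ae_restrict_of_ae ((hfeq e he).mono fun z hz => by simp only [hz]))
    exact (hdens e he).congr (fun j => by rw [hcongr j])
  have hev : ∀ᶠ j in atTop, ∀ e ∈ S,
      (∫ z in nbox N e j x, |f e z - fplus e x| ∂μW) / (μW (nbox N e j x)).toReal
        < fplus e x / (4 * S.card) := by
    rw [eventually_all_finset]
    intro e he
    refine (hδ e he).eventually_lt_const ?_
    have := hposx e he
    positivity
  obtain ⟨J, hJ⟩ := hev.exists
  -- the outer box at level J
  have hBmeas : MeasurableSet {y : W → Ω | ∀ w ∈ U, y w ∈ N J (x w)} :=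
    aux_meas U _ (fun w => hmeasN J (x w))
  have hBval : μW {y | ∀ w ∈ U, y w ∈ N J (x w)} = ∏ w ∈ U, μ (N J (x w)) := by
    rw [hμW]; exact aux_measure μ U _ (fun w => hmeasN J (x w))
  have hBpos : μW {y | ∀ w ∈ U, y w ∈ N J (x w)} ≠ 0 := by
    rw [hBval]
    exact Finset.prod_ne_zero_iff.mpr (fun w hw => hUpos J w hw)
  set B : Set (W → Ω) := {y | ∀ w ∈ U, y w ∈ N J (x w)} with hB
  set β : ℝ := (μW B).toReal with hβ
  have hβpos : 0 < β := ENNReal.toReal_pos hBpos (measure_ne_top _ _)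
  set bad : Finset W → Set (W → Ω) := fun e => {y | fplus e x / 2 ≤ |f e y - fplus e x|}
    with hbaddef
  have hbadmeas : ∀ e ∈ S, MeasurableSet (bad e) := by
    intro e he
    exact measurableSet_le measurable_const ((hfmeas' e he).sub measurable_const).abs
  -- Markov bound for each bad set
  have hMarkov : ∀ e ∈ S, (μW (B ∩ bad e)).toReal ≤ β / (2 * S.card) := by
    intro e he
    have habs_meas : Measurable (fun y => |f e y - fplus e x|) :=
      ((hfmeas' e he).sub measurable_const).abs
    have hint : Integrable (fun y => |f e y - fplus e x|) (μW.restrict B) :=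
      (((hfint e he).sub (integrable_const _)).abs).restrict
    have h1 := mul_meas_ge_le_integral_of_nonneg (μ := μW.restrict B)
      (f := fun y => |f e y - fplus e x|)
      (Filter.Eventually.of_forall fun y => abs_nonneg _) hint (fplus e x / 2)
    have hrest : (μW.restrict B) {y | fplus e x / 2 ≤ |f e y - fplus e x|}
        = μW (B ∩ bad e) := by
      rw [Measure.restrict_apply (hbadmeas e he), Set.inter_comm]
    rw [measureReal_def, hrest] at h1
    -- factorize the integral over B
    have hfac := aux_factor μ e U (fun w => N J (x w)) (fun w => hmeasN J (x w))
      (fun y => |f e y - fplus e x|)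
      (fun y z hyz => by simp only [hdep e he y z hyz]) x
    rw [Finset.inter_eq_right.mpr (heU e he), ← hB, ← hμW] at hfac
    -- the inner set is nbox N e J x
    have hinner : {y : W → Ω | ∀ w ∈ e, y w ∈ N J (x w)} = nbox N e J x := rfl
    rw [hinner] at hfac
    set D : ℝ := ∫ z in nbox N e J x, |f e z - fplus e x| ∂μW with hD
    set me : ℝ := (μW (nbox N e J x)).toReal with hme
    have hmene : me ≠ 0 :=
      ENNReal.toReal_ne_zero.mpr ⟨hnboxpos e he J, measure_ne_top _ _⟩
    have hmepos : 0 < me := lt_of_le_of_ne ENNReal.toReal_nonneg (Ne.symm hmene)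
    have hDval : D = (D / me) * me := (div_mul_cancel₀ D hmene).symm
    have hβval : β = (∏ w ∈ U \ e, μ (N J (x w))).toReal * me := by
      rw [hβ, hme, hB, hBval, hnboxval e J, ← ENNReal.toReal_mul,
        Finset.prod_sdiff (heU e he)]
    have hratio : D / me < fplus e x / (4 * S.card) := hJ e he
    have hprodnn : (0:ℝ) ≤ (∏ w ∈ U \ e, μ (N J (x w))).toReal := ENNReal.toReal_nonneg
    have hchain : (fplus e x / 2) * (μW (B ∩ bad e)).toReal
        ≤ (fplus e x / (4 * S.card)) * β := by
      calc (fplus e x / 2) * (μW (B ∩ bad e)).toReal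
          ≤ ∫ y in B, |f e y - fplus e x| ∂μW := h1
        _ = (∏ w ∈ U \ e, μ (N J (x w))).toReal * D := hfac
        _ = (∏ w ∈ U \ e, μ (N J (x w))).toReal * ((D / me) * me) := by rw [← hDval]
        _ ≤ (∏ w ∈ U \ e, μ (N J (x w))).toReal * ((fplus e x / (4 * S.card)) * me) := by
            apply mul_le_mul_of_nonneg_left _ hprodnn
            exact mul_le_mul_of_nonneg_right (le_of_lt hratio) (le_of_lt hmepos)
        _ = (fplus e x / (4 * S.card)) * β := by rw [hβval]; ring
    have hcpos := hposx e he
    have hAnn : (0:ℝ) ≤ (μW (B ∩ bad e)).toReal := ENNReal.toReal_nonneg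
    -- divide by fplus e x / 2
    have h2 : (μW (B ∩ bad e)).toReal ≤ ((fplus e x / (4 * S.card)) * β) / (fplus e x / 2) := by
      rw [le_div_iff₀ (by positivity)]
      linarith [hchain]
    refine h2.trans (le_of_eq ?_)
    rw [div_eq_iff (by positivity)]
    ring
  -- the good set
  set Bad : Set (W → Ω) := ⋃ e ∈ S, bad e with hBad
  set good : Set (W → Ω) := B \ Bad with hgood
  have hBadmeas : MeasurableSet Bad :=
    MeasurableSet.biUnion S.countable_toSet (fun e he => hbadmeas e he)
  have hgoodmeas : MeasurableSet good := hBmeas.diff hBadmeas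
  have hkey : β ≤ (μW good).toReal + ∑ e ∈ S, (μW (B ∩ bad e)).toReal := by
    have hsub : B ⊆ good ∪ ⋃ e ∈ S, (B ∩ bad e) := by
      intro y hy
      by_cases h : y ∈ Bad
      · right
        obtain ⟨e, he, hye⟩ := Set.mem_iUnion₂.mp h
        exact Set.mem_iUnion₂.mpr ⟨e, he, ⟨hy, hye⟩⟩
      · left; exact ⟨hy, h⟩
    have h2 : μW B ≤ μW good + ∑ e ∈ S, μW (B ∩ bad e) := by
      refine (measure_mono hsub).trans ((measure_union_le _ _).trans ?_)
      exact add_le_add le_rfl (measure_biUnion_finset_le S _)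
    have hne : μW good + ∑ e ∈ S, μW (B ∩ bad e) ≠ ⊤ := by
      refine ENNReal.add_ne_top.mpr ⟨measure_ne_top _ _, ?_⟩
      exact (ENNReal.sum_lt_top.mpr (fun e _ => measure_lt_top _ _)).ne
    have := ENNReal.toReal_mono hne h2
    rwa [ENNReal.toReal_add (measure_ne_top _ _)
        ((ENNReal.sum_lt_top.mpr (fun e _ => measure_lt_top _ _)).ne),
      ENNReal.toReal_sum (fun e _ => measure_ne_top _ _)] at this
  have hgood_ge : β / 2 ≤ (μW good).toReal := by
    have hsum : ∑ e ∈ S, (μW (B ∩ bad e)).toReal ≤ ∑ _e ∈ S, β / (2 * S.card) :=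
      Finset.sum_le_sum (fun e he => hMarkov e he)
    have hsumval : ∑ _e ∈ S, β / (2 * S.card) = β / 2 := by
      rw [Finset.sum_const, nsmul_eq_mul]
      field_simp
    rw [hsumval] at hsum
    linarith [hkey, hsum]
  have hgoodpos : 0 < (μW good).toReal := lt_of_lt_of_le (by positivity) hgood_ge
  -- pointwise lower bound on the good set
  set P : ℝ := ∏ e ∈ S, (fplus e x / 2) with hP
  have hPpos : 0 < P := Finset.prod_pos (fun e he => by linarith [hposx e he])
  have hlower : ∀ y ∈ good, P ≤ ∏ e ∈ S, f e y := by
    intro y hy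
    refine Finset.prod_le_prod (fun e he => by linarith [hposx e he]) ?_
    intro e he
    have hnotbad : y ∉ bad e := fun hb => hy.2 (Set.mem_iUnion₂.mpr ⟨e, he, hb⟩)
    have habs : |f e y - fplus e x| < fplus e x / 2 := by
      by_contra hcon
      exact hnotbad (le_of_not_gt hcon)
    have := abs_lt.mp habs
    linarith
  -- integrability of the product
  have hFmeas : Measurable (fun y => ∏ e ∈ S, f e y) :=
    Finset.measurable_prod S (fun e he => hfmeas' e he)
  have hFnonneg : ∀ y, (0:ℝ) ≤ ∏ e ∈ S, f e y :=
    fun y => Finset.prod_nonneg (fun e he => (h01 e he y).1)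
  have hFle1 : ∀ y, (∏ e ∈ S, f e y) ≤ 1 :=
    fun y => Finset.prod_le_one (fun e he => (h01 e he y).1) (fun e he => (h01 e he y).2)
  have hFint : Integrable (fun y => ∏ e ∈ S, f e y) μW := by
    refine Integrable.mono' (integrable_const (1:ℝ)) hFmeas.aestronglyMeasurable ?_
    filter_upwards with y
    rw [Real.norm_eq_abs, abs_le]
    exact ⟨by linarith [hFnonneg y], hFle1 y⟩
  calc (0:ℝ) < P * (μW good).toReal := mul_pos hPpos hgoodpos
    _ ≤ ∫ y in good, ∏ e ∈ S, f e y ∂μW :=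
        by have := setIntegral_ge_of_const_le_real hgoodmeas (measure_ne_top _ _) hlower hFint.integrableOn; rwa [measureReal_def] at this
    _ ≤ ∫ y, ∏ e ∈ S, f e y ∂μW :=
        setIntegral_le_integral hFint (Filter.Eventually.of_forall hFnonneg)
end

section
/- Let (Ω, B, μ) be a probability space, {N^j} an increasing sequence of finite measurable partitions generating N^σ, and f : Ω → [0,1] measurable. For any α < β and ε > 0, there exists j₀ such that μ({x : E(f|N^σ)(x) ≤ α and sup_{j ≥ j₀} f^j(x) ≥ β}) < ε, where f^j(x) is the average of f over N^j(x). -/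
open MeasureTheory Filter MeasurableSpace Set Topology
set_option linter.unusedSectionVars false

section PartitionAux

variable {Ω : Type*} [m0 : MeasurableSpace Ω] (μ : Measure Ω) [IsProbabilityMeasure μ]
variable {P : Ω → Set Ω}

/-- The average of `f` over the cell containing `x`. -/
noncomputable def cellAvg (μ : Measure Ω) (P : Ω → Set Ω) (f : Ω → ℝ) (x : Ω) : ℝ :=
  (∫ y in P x, f y ∂μ) / (μ (P x)).toReal

lemma cellAvg_measurable
    (hmem : ∀ x, x ∈ P x) (hcell : ∀ x y, y ∈ P x → P y = P x)
    (hfin : (Set.range P).Finite) (f : Ω → ℝ) :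
    Measurable[generateFrom {s : Set Ω | ∃ x, s = P x}] (cellAvg μ P f) := by
  intro t _
  have hconst : ∀ x y, y ∈ P x → cellAvg μ P f y = cellAvg μ P f x := by
    intro x y hy
    simp only [cellAvg, hcell x y hy]
  have hpre : cellAvg μ P f ⁻¹' t = ⋃₀ {c | ∃ x, cellAvg μ P f x ∈ t ∧ c = P x} := by
    ext z
    constructor
    · intro hz
      exact ⟨P z, ⟨z, hz, rfl⟩, hmem z⟩
    · rintro ⟨c, ⟨x, hx, rfl⟩, hz⟩
      simpa [Set.mem_preimage, hconst x z hz] using hx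
  rw [hpre]
  refine MeasurableSet.sUnion ?_ ?_
  · exact ((hfin.subset (by rintro c ⟨x, _, rfl⟩; exact ⟨x, rfl⟩)).countable)
  · rintro c ⟨x, _, rfl⟩
    exact measurableSet_generateFrom ⟨x, rfl⟩

lemma cellAvg_mem_Icc (hmeasP : ∀ x, MeasurableSet (P x))
    {f : Ω → ℝ} (hf : Measurable f) (hf01 : ∀ x, f x ∈ Set.Icc (0 : ℝ) 1) (x : Ω) :
    cellAvg μ P f x ∈ Set.Icc (0 : ℝ) 1 := by
  have hint : IntegrableOn f (P x) μ := by
    refine (Integrable.integrableOn ?_)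
    refine ⟨hf.aestronglyMeasurable, HasFiniteIntegral.of_bounded (C := 1) (ae_of_all _ ?_)⟩
    intro y
    rw [Real.norm_eq_abs, abs_le]
    exact ⟨by linarith [(hf01 y).1], (hf01 y).2⟩
  constructor
  · exact div_nonneg (setIntegral_nonneg (hmeasP x) fun y _ => (hf01 y).1)
      ENNReal.toReal_nonneg
  · rcases eq_or_ne ((μ (P x)).toReal) 0 with h0 | h0
    · simp [cellAvg, h0]
    · rw [cellAvg, div_le_one (lt_of_le_of_ne ENNReal.toReal_nonneg (Ne.symm h0))]
      calc ∫ y in P x, f y ∂μ ≤ ∫ _ in P x, (1 : ℝ) ∂μ :=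
            integral_mono hint (integrable_const 1) fun y => (hf01 y).2
        _ = (μ (P x)).toReal := by simp [Measure.real]


lemma cellAvg_integrable (hmeasP : ∀ x, MeasurableSet (P x))
    (hmem : ∀ x, x ∈ P x) (hcell : ∀ x y, y ∈ P x → P y = P x)
    (hfin : (Set.range P).Finite)
    {f : Ω → ℝ} (hf : Measurable f) (hf01 : ∀ x, f x ∈ Set.Icc (0 : ℝ) 1) :
    Integrable (cellAvg μ P f) μ := by
  have hle : generateFrom {s : Set Ω | ∃ x, s = P x} ≤ m0 :=
    generateFrom_le (by rintro s ⟨x, rfl⟩; exact hmeasP x)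
  have hmeas : Measurable (cellAvg μ P f) :=
    fun t ht => hle _ (cellAvg_measurable μ hmem hcell hfin f ht)
  refine ⟨hmeas.aestronglyMeasurable, HasFiniteIntegral.of_bounded (C := 1) (ae_of_all _ ?_)⟩
  intro y
  rw [Real.norm_eq_abs, abs_le]
  have h := cellAvg_mem_Icc μ hmeasP hf hf01 (P := P) y
  exact ⟨by linarith [h.1], h.2⟩

lemma integrable_of_Icc {f : Ω → ℝ} (hf : Measurable f)
    (hf01 : ∀ x, f x ∈ Set.Icc (0 : ℝ) 1) : Integrable f μ := by
  refine ⟨hf.aestronglyMeasurable, HasFiniteIntegral.of_bounded (C := 1) (ae_of_all _ ?_)⟩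
  intro y
  rw [Real.norm_eq_abs, abs_le]
  exact ⟨by linarith [(hf01 y).1], (hf01 y).2⟩

lemma cellAvg_ae_eq_condexp (hmeasP : ∀ x, MeasurableSet (P x))
    (hmem : ∀ x, x ∈ P x) (hcell : ∀ x y, y ∈ P x → P y = P x)
    (hfin : (Set.range P).Finite)
    {f : Ω → ℝ} (hf : Measurable f) (hf01 : ∀ x, f x ∈ Set.Icc (0 : ℝ) 1) :
    cellAvg μ P f =ᵐ[μ] μ[f|generateFrom {s : Set Ω | ∃ x, s = P x}] := by
  set h := cellAvg μ P f with hh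
  have hle : generateFrom {s : Set Ω | ∃ x, s = P x} ≤ m0 :=
    generateFrom_le (by rintro s ⟨x, rfl⟩; exact hmeasP x)
  have hfint : Integrable f μ := integrable_of_Icc μ hf hf01
  have hhint : Integrable h μ := cellAvg_integrable μ hmeasP hmem hcell hfin hf hf01
  have hh01 : ∀ x, h x ∈ Set.Icc (0 : ℝ) 1 := cellAvg_mem_Icc μ hmeasP hf hf01
  -- integral of h over a cell equals integral of f over the cell
  have hcellint : ∀ x, (∫ y in P x, h y ∂μ) = ∫ y in P x, f y ∂μ := by
    intro x
    have hconst : Set.EqOn h (fun _ => h x) (P x) := by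
      intro y hy
      simp only [hh, cellAvg, hcell x y hy]
    rw [setIntegral_congr_fun (hmeasP x) hconst, setIntegral_const]
    rcases eq_or_ne (μ (P x)) 0 with h0 | h0
    · rw [Measure.real, h0]
      simp [Measure.restrict_eq_zero.2 h0]
    · have htR : (μ (P x)).toReal ≠ 0 :=
        ENNReal.toReal_ne_zero.2 ⟨h0, measure_ne_top μ _⟩
      simp only [hh, cellAvg, smul_eq_mul, Measure.real]
      field_simp
  -- equality of the withDensity measures on each cell
  have hcellν : ∀ x, (μ.withDensity fun y => ENNReal.ofReal (h y)) (P x)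
      = (μ.withDensity fun y => ENNReal.ofReal (f y)) (P x) := by
    intro x
    rw [withDensity_apply _ (hmeasP x), withDensity_apply _ (hmeasP x),
      ← ofReal_integral_eq_lintegral_ofReal hhint.integrableOn
        (ae_of_all _ fun y => (hh01 y).1),
      ← ofReal_integral_eq_lintegral_ofReal hfint.integrableOn
        (ae_of_all _ fun y => (hf01 y).1),
      hcellint x]
  -- distinct cells are disjoint; cells cover the space
  have hdisj : (Set.range P).Pairwise Disjoint := by
    rintro s ⟨x, rfl⟩ t ⟨y, rfl⟩ hst
    rw [Set.disjoint_left]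
    intro z hzs hzt
    exact hst ((hcell x z hzs).symm.trans (hcell y z hzt))
  have hcover : (⋃₀ Set.range P) = Set.univ := by
    ext z
    simp only [Set.mem_sUnion, Set.mem_univ, iff_true]
    exact ⟨P z, ⟨z, rfl⟩, hmem z⟩
  have hνuniv : (μ.withDensity fun y => ENNReal.ofReal (h y)) Set.univ
      = (μ.withDensity fun y => ENNReal.ofReal (f y)) Set.univ := by
    rw [← hcover,
      measure_sUnion hfin.countable hdisj (by rintro s ⟨x, rfl⟩; exact hmeasP x),
      measure_sUnion hfin.countable hdisj (by rintro s ⟨x, rfl⟩; exact hmeasP x)]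
    refine tsum_congr fun c => ?_
    obtain ⟨x, hx⟩ := c.2
    rw [← hx]
    exact hcellν x
  -- the two withDensity measures agree on m'
  have hlt : ∫⁻ _, (1 : ENNReal) ∂μ < ⊤ := by
    simpa using measure_lt_top μ Set.univ
  haveI : IsFiniteMeasure (μ.withDensity fun y => ENNReal.ofReal (h y)) :=
    isFiniteMeasure_withDensity (ne_of_lt (lt_of_le_of_lt
      (lintegral_mono (g := fun _ => (1 : ENNReal))
        fun y => ENNReal.ofReal_le_one.2 (hh01 y).2) hlt))
  haveI : IsFiniteMeasure (μ.withDensity fun y => ENNReal.ofReal (f y)) :=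
    isFiniteMeasure_withDensity (ne_of_lt (lt_of_le_of_lt
      (lintegral_mono (g := fun _ => (1 : ENNReal))
        fun y => ENNReal.ofReal_le_one.2 (hf01 y).2) hlt))
  have hpi : IsPiSystem {s : Set Ω | ∃ x, s = P x} := by
    rintro s ⟨x, rfl⟩ t ⟨y, rfl⟩ hne
    obtain ⟨z, hzx, hzy⟩ := hne
    have : P x = P y := (hcell x z hzx).symm.trans (hcell y z hzy)
    rw [← this, Set.inter_self]
    exact ⟨x, rfl⟩
  have hext : ((μ.withDensity fun y => ENNReal.ofReal (h y)).trim hle)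
      = ((μ.withDensity fun y => ENNReal.ofReal (f y)).trim hle) := by
    refine ext_of_generate_finite {s : Set Ω | ∃ x, s = P x} rfl hpi ?_ ?_
    · rintro s ⟨x, rfl⟩
      rw [trim_measurableSet_eq hle (measurableSet_generateFrom ⟨x, rfl⟩),
        trim_measurableSet_eq hle (measurableSet_generateFrom ⟨x, rfl⟩)]
      exact hcellν x
    · rw [trim_measurableSet_eq hle MeasurableSet.univ,
        trim_measurableSet_eq hle MeasurableSet.univ]
      exact hνuniv
  -- hence the set integrals agree on all m'-measurable sets
  have hseteq : ∀ s : Set Ω, MeasurableSet[generateFrom {s : Set Ω | ∃ x, s = P x}] s →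
      (∫ y in s, h y ∂μ) = ∫ y in s, f y ∂μ := by
    intro s hs
    have hsm : MeasurableSet s := hle _ hs
    have h1 : (μ.withDensity fun y => ENNReal.ofReal (h y)) s
        = (μ.withDensity fun y => ENNReal.ofReal (f y)) s := by
      rw [← trim_measurableSet_eq hle hs, ← trim_measurableSet_eq hle hs, hext]
    rw [withDensity_apply _ hsm, withDensity_apply _ hsm,
      ← ofReal_integral_eq_lintegral_ofReal hhint.integrableOn
        (ae_of_all _ fun y => (hh01 y).1),
      ← ofReal_integral_eq_lintegral_ofReal hfint.integrableOn
        (ae_of_all _ fun y => (hf01 y).1)] at h1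
    have hn1 : (0 : ℝ) ≤ ∫ y in s, h y ∂μ :=
      setIntegral_nonneg hsm fun y _ => (hh01 y).1
    have hn2 : (0 : ℝ) ≤ ∫ y in s, f y ∂μ :=
      setIntegral_nonneg hsm fun y _ => (hf01 y).1
    exact (ENNReal.ofReal_eq_ofReal_iff hn1 hn2).1 h1
  haveI : SigmaFinite (μ.trim hle) := by
    haveI := isFiniteMeasure_trim (μ := μ) hle
    infer_instance
  refine ae_eq_condExp_of_forall_setIntegral_eq hle hfint
    (fun s _ _ => hhint.integrableOn) (fun s hs _ => hseteq s hs) ?_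
  exact ((cellAvg_measurable μ hmem hcell hfin f).stronglyMeasurable).aestronglyMeasurable

end PartitionAux


/-- The key quantitative step in the a.e. convergence of partition averages: for
α < β and ε > 0 there is a j₀ so that the set of points where the conditional
expectation is ≤ α but some partition average at a level j ≥ j₀ is ≥ β has measure
less than ε. -/
theorem stmt_19
    {Ω : Type*} [MeasurableSpace Ω] (μ : Measure Ω) [IsProbabilityMeasure μ]
    (N : ℕ → Ω → Set Ω)
    (hmem : ∀ j x, x ∈ N j x)
    (hmeasN : ∀ j x, MeasurableSet (N j x))
    (hcell : ∀ j x y, y ∈ N j x → N j y = N j x)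
    (hfin : ∀ j, (Set.range (N j)).Finite)
    (href : ∀ j x, N (j + 1) x ⊆ N j x)
    (f : Ω → ℝ) (hf : Measurable f) (hf01 : ∀ x, f x ∈ Set.Icc (0 : ℝ) 1) :
    ∀ α β ε : ℝ, α < β → 0 < ε →
      ∃ j₀ : ℕ,
        μ {x : Ω |
            (μ[f|MeasurableSpace.generateFrom {s : Set Ω | ∃ j x, s = N j x}]) x ≤ α
            ∧ ∃ j ≥ j₀, β ≤ (∫ y in N j x, f y ∂μ) / (μ (N j x)).toReal}
          < ENNReal.ofReal ε := by
  intro α β ε hαβ hε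
  -- the filtration of partition σ-algebras
  have hmono : Monotone fun j => generateFrom {s : Set Ω | ∃ x, s = N j x} := by
    refine monotone_nat_of_le_succ fun j => ?_
    refine generateFrom_le ?_
    rintro s ⟨x, rfl⟩
    have hNx : N j x = ⋃₀ {t : Set Ω | ∃ y ∈ N j x, t = N (j + 1) y} := by
      ext z
      constructor
      · intro hz
        exact ⟨N (j + 1) z, ⟨z, hz, rfl⟩, hmem _ z⟩
      · rintro ⟨t, ⟨y, hy, rfl⟩, hz⟩
        have : N (j + 1) y ⊆ N j x := (hcell j x y hy) ▸ href j y
        exact this hz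
    rw [hNx]
    refine MeasurableSet.sUnion ?_ ?_
    · exact ((hfin (j + 1)).subset (by rintro t ⟨y, _, rfl⟩; exact ⟨y, rfl⟩)).countable
    · rintro t ⟨y, _, rfl⟩
      exact measurableSet_generateFrom ⟨y, rfl⟩
  let ℱ : Filtration ℕ ‹MeasurableSpace Ω› :=
    ⟨fun j => generateFrom {s : Set Ω | ∃ x, s = N j x}, hmono,
      fun j => generateFrom_le (by rintro s ⟨x, rfl⟩; exact hmeasN j x)⟩
  have hsup : (⨆ j, ℱ j) = generateFrom {s : Set Ω | ∃ j x, s = N j x} := by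
    show (⨆ j, generateFrom {s : Set Ω | ∃ x, s = N j x}) = _
    rw [iSup_generateFrom]
    congr 1
    ext s
    simp only [Set.mem_iUnion, Set.mem_setOf_eq]
  set g := μ[f|MeasurableSpace.generateFrom {s : Set Ω | ∃ j x, s = N j x}] with hg
  have hgmeas : Measurable g := by
    have hle : generateFrom {s : Set Ω | ∃ j x, s = N j x} ≤ ‹MeasurableSpace Ω› := by
      rw [← hsup]; exact iSup_le fun j => ℱ.le j
    exact fun t ht => hle _ (stronglyMeasurable_condExp.measurable ht)
  -- a.e. convergence of the cell averages to g
  have hae : ∀ᵐ x ∂μ, Tendsto (fun j => cellAvg μ (N j) f x) atTop (𝓝 (g x)) := by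
    have h1 := tendsto_ae_condExp (ℱ := ℱ) (μ := μ) f
    rw [hsup] at h1
    have h2 : ∀ᵐ x ∂μ, ∀ j, cellAvg μ (N j) f x = (μ[f|ℱ j]) x :=
      ae_all_iff.2 fun j =>
        cellAvg_ae_eq_condexp μ (hmeasN j) (hmem j) (hcell j) (hfin j) hf hf01
    filter_upwards [h1, h2] with x hx1 hx2
    exact hx1.congr fun j => (hx2 j).symm
  -- the bad sets
  set B : ℕ → Set Ω := fun j₀ =>
    {x | g x ≤ α ∧ ∃ j ≥ j₀, β ≤ cellAvg μ (N j) f x} with hB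
  have havgmeas : ∀ j, Measurable (cellAvg μ (N j) f) := fun j => fun t ht =>
    (ℱ.le j) _ (cellAvg_measurable μ (hmem j) (hcell j) (hfin j) f ht)
  have hmeasB : ∀ j₀, MeasurableSet (B j₀) := by
    intro j₀
    have : B j₀ = {x | g x ≤ α} ∩ ⋃ j, ⋃ (_ : j₀ ≤ j), {x | β ≤ cellAvg μ (N j) f x} := by
      ext x
      simp only [hB, Set.mem_setOf_eq, Set.mem_inter_iff, Set.mem_iUnion, exists_prop]
    rw [this]
    exact (measurableSet_le hgmeas measurable_const).inter
      (MeasurableSet.iUnion fun j => MeasurableSet.iUnion fun _ =>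
        measurableSet_le measurable_const (havgmeas j))
  have hanti : Antitone B := by
    intro j₀ j₁ hj x hx
    obtain ⟨h1, j, hj2, h3⟩ := hx
    exact ⟨h1, j, le_trans hj hj2, h3⟩
  have hinter : μ (⋂ j₀, B j₀) = 0 := by
    refine measure_eq_zero_iff_ae_notMem.2 ?_
    filter_upwards [hae] with x hx hxmem
    simp only [Set.mem_iInter] at hxmem
    have hgα : g x ≤ α := (hxmem 0).1
    have hev : ∀ᶠ j in atTop, cellAvg μ (N j) f x < β :=
      hx.eventually_lt_const (lt_of_le_of_lt hgα hαβ)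
    obtain ⟨j₀, hj₀⟩ := eventually_atTop.1 hev
    obtain ⟨j, hj, hbj⟩ := (hxmem j₀).2
    exact absurd hbj (not_le.2 (hj₀ j hj))
  have htendsto := tendsto_measure_iInter_atTop
    (fun j₀ => (hmeasB j₀).nullMeasurableSet) hanti ⟨0, measure_ne_top μ _⟩
  rw [hinter] at htendsto
  have hev := htendsto.eventually_lt_const (ENNReal.ofReal_pos.2 hε)
  obtain ⟨j₀, hj₀⟩ := eventually_atTop.1 hev
  exact ⟨j₀, hj₀ j₀ le_rfl⟩
end
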